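/- arXiv:1408.3195 — 3 statements merged into one kernel-verified Lean document; each statement's English description precedes it below -/
import Mathlib

section
/- Let q, p ∈ ℝ² be distinct points, θ the angle of arrival at p of a signal from q reflected once off a flat scatterer with orientation angle γ (so the reflection point r lies on the ray from p with direction (cos θ, sin θ), and the path q→r→p satisfies the law of reflection at a line of direction angle γ). Then the total path length d = |q - r| + |r - p| satisfies d = (1/cos(θ - γ)) · (cos γ, sin γ)ᵀ (q - p). -/
/-- The point of `EuclideanSpace ℝ (Fin 2)` with coordinates `a`, `b`. -/
noncomputable def vec2 (a b : ℝ) : EuclideanSpace ℝ (Fin 2) :=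
  (WithLp.equiv 2 (Fin 2 → ℝ)).symm ![a, b]

/-- Reflection of a vector of ℝ² across the line through the origin with
direction angle `γ` (measured from the horizontal). -/
noncomputable def reflDir (γ : ℝ) (v : EuclideanSpace ℝ (Fin 2)) : EuclideanSpace ℝ (Fin 2) :=
  vec2 (Real.cos (2 * γ) * v 0 + Real.sin (2 * γ) * v 1)
       (Real.sin (2 * γ) * v 0 - Real.cos (2 * γ) * v 1)

/-- Single-bounce reflection path length formula:
`d = (1/cos(θ-γ)) ⬝ (cos γ, sin γ)ᵀ (q - p)`. The reflection point `r` lies on the ray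
from `p` with direction `(cos θ, sin θ)`, and the law of reflection at the scatterer line
of direction angle `γ` through `r` is expressed by requiring the mirror image of `q`
across that line to lie on the same ray, beyond `r`. -/
theorem stmt0 (q p r : EuclideanSpace ℝ (Fin 2)) (θ γ t s : ℝ)
    (hqp : q ≠ p)
    (hcos : Real.cos (θ - γ) ≠ 0)
    (ht : 0 ≤ t)
    (hr : r = p + t • vec2 (Real.cos θ) (Real.sin θ))
    (hts : t ≤ s)
    (hrefl : r + reflDir γ (q - r) = p + s • vec2 (Real.cos θ) (Real.sin θ)) :
    ‖q - r‖ + ‖r - p‖ =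
      (1 / Real.cos (θ - γ)) * (Real.cos γ * (q - p) 0 + Real.sin γ * (q - p) 1) := by
  have hr0 : r 0 = p 0 + t * Real.cos θ := by
    rw [hr]; simp [vec2, WithLp.equiv_symm_apply, PiLp.toLp_apply]
  have hr1 : r 1 = p 1 + t * Real.sin θ := by
    rw [hr]; simp [vec2, WithLp.equiv_symm_apply, PiLp.toLp_apply]
  have h0 : r 0 + (Real.cos (2*γ) * (q 0 - r 0) + Real.sin (2*γ) * (q 1 - r 1))
      = p 0 + s * Real.cos θ := by
    have h := congr_arg (fun x : EuclideanSpace ℝ (Fin 2) => x 0) hrefl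
    simpa [reflDir, vec2, WithLp.equiv_symm_apply, PiLp.toLp_apply] using h
  have h1 : r 1 + (Real.sin (2*γ) * (q 0 - r 0) - Real.cos (2*γ) * (q 1 - r 1))
      = p 1 + s * Real.sin θ := by
    have h := congr_arg (fun x : EuclideanSpace ℝ (Fin 2) => x 1) hrefl
    simpa [reflDir, vec2, WithLp.equiv_symm_apply, PiLp.toLp_apply] using h
  have E0 : Real.cos (2*γ) * (q 0 - r 0) + Real.sin (2*γ) * (q 1 - r 1)
      = (s - t) * Real.cos θ := by
    have := hr0; linarith [h0]
  have E1 : Real.sin (2*γ) * (q 0 - r 0) - Real.cos (2*γ) * (q 1 - r 1)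
      = (s - t) * Real.sin θ := by
    have := hr1; linarith [h1]
  have hp2γ := Real.sin_sq_add_cos_sq (2*γ)
  have hpθ := Real.sin_sq_add_cos_sq θ
  have hpγ := Real.sin_sq_add_cos_sq γ
  have hC := Real.cos_two_mul γ
  have hS := Real.sin_two_mul γ
  set A := q 0 - r 0 with hA
  set B := q 1 - r 1 with hB
  have hnorm1 : ‖q - r‖ = s - t := by
    have he : ‖q - r‖ = Real.sqrt ((q 0 - r 0)^2 + (q 1 - r 1)^2) := by
      rw [EuclideanSpace.norm_eq]
      simp [Fin.sum_univ_two, sq_abs]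
    rw [he]
    have hsq : (q 0 - r 0)^2 + (q 1 - r 1)^2 = (s - t)^2 := by
      linear_combination (Real.cos (2*γ)*A + Real.sin (2*γ)*B + (s-t)*Real.cos θ) * E0
        + (Real.sin (2*γ)*A - Real.cos (2*γ)*B + (s-t)*Real.sin θ) * E1
        - (A^2 + B^2) * hp2γ + (s-t)^2 * hpθ
    rw [hsq, Real.sqrt_sq (by linarith)]
  have hnorm2 : ‖r - p‖ = t := by
    have he : ‖r - p‖ = Real.sqrt ((r 0 - p 0)^2 + (r 1 - p 1)^2) := by
      rw [EuclideanSpace.norm_eq]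
      simp [Fin.sum_univ_two, sq_abs]
    rw [he, hr0, hr1]
    have hx : (p 0 + t * Real.cos θ - p 0)^2 + (p 1 + t * Real.sin θ - p 1)^2 = t^2 := by
      linear_combination t^2 * hpθ
    rw [hx, Real.sqrt_sq ht]
  have hq0 : (q - p) 0 = q 0 - p 0 := by simp
  have hq1 : (q - p) 1 = q 1 - p 1 := by simp
  have hkey : Real.cos γ * (q 0 - p 0) + Real.sin γ * (q 1 - p 1)
      = s * Real.cos (θ - γ) := by
    rw [Real.cos_sub]
    linear_combination (Real.cos γ) * E0 + (Real.sin γ) * E1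
      + Real.cos γ * hr0 + Real.sin γ * hr1
      - (A * Real.cos γ - B * Real.sin γ) * hC
      - (A * Real.sin γ + B * Real.cos γ) * hS
      - 2 * A * Real.cos γ * hpγ
  rw [hnorm1, hnorm2, hq0, hq1, hkey]
  field_simp
  ring
end

section
/- Let J = I_N - (1/N)11ᵀ and let W be an N×N matrix with W1 = 1. If the spectral norm ρ of the symmetric matrix Wᵀ J W satisfies ρ < 1, then for every s ∈ ℝᴺ, ‖J W s‖² ≤ ρ · ‖J s‖², so the Euclidean norm of the disagreement vector contracts by factor √ρ under application of W. -/
open scoped Matrix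

/-- The centering projection `J = I - (1/N)·11ᵀ` on `ℝᴺ`. -/
noncomputable def centering (N : ℕ) : Matrix (Fin N) (Fin N) ℝ :=
  1 - ((N : ℝ)⁻¹) • Matrix.of (fun _ _ => (1 : ℝ))

lemma centering_mulVec_apply (N : ℕ) (v : Fin N → ℝ) (i : Fin N) :
    (centering N).mulVec v i = v i - (N : ℝ)⁻¹ * ∑ j, v j := by
  simp only [centering, Matrix.mulVec, dotProduct, Matrix.sub_apply,
    Matrix.one_apply, Matrix.smul_apply, Matrix.of_apply, smul_eq_mul, mul_one,
    sub_mul, Finset.sum_sub_distrib, ite_mul, one_mul, zero_mul]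
  congr 1
  · simp
  · rw [Finset.mul_sum]

lemma centering_symm (N : ℕ) : (centering N).transpose = centering N := by
  unfold centering
  ext i j
  simp [Matrix.transpose_apply, Matrix.sub_apply, Matrix.one_apply, eq_comm]

lemma centering_idem (N : ℕ) (v : Fin N → ℝ) :
    (centering N).mulVec ((centering N).mulVec v) = (centering N).mulVec v := by
  funext i
  have hN : ((N:ℝ))⁻¹ * (N:ℝ) = 1 := by
    have : 0 < N := Fin.pos i
    field_simp
  have hsum : ∑ j, (centering N).mulVec v j = 0 := by
    simp only [centering_mulVec_apply]
    rw [Finset.sum_sub_distrib, Finset.sum_const, Finset.card_univ,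
      Fintype.card_fin, nsmul_eq_mul, ← mul_assoc, mul_comm (N:ℝ) (N:ℝ)⁻¹, hN,
      one_mul, sub_self]
  rw [centering_mulVec_apply, hsum, mul_zero, sub_zero]

lemma centering_W (N : ℕ) (W : Matrix (Fin N) (Fin N) ℝ)
    (hrow : W.mulVec (fun _ => 1) = fun _ => 1) (s : Fin N → ℝ) :
    (centering N).mulVec (W.mulVec ((centering N).mulVec s)) =
      (centering N).mulVec (W.mulVec s) := by
  funext i
  have hN : ((N:ℝ))⁻¹ * (N:ℝ) = 1 := by
    have : 0 < N := Fin.pos i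
    field_simp
  set m : ℝ := (N : ℝ)⁻¹ * ∑ j, s j with hm
  have hJs : (centering N).mulVec s = fun j => s j - m :=
    funext fun j => centering_mulVec_apply N s j
  have hWJ : W.mulVec ((centering N).mulVec s) = fun k => W.mulVec s k - m := by
    funext k
    have hrk : ∑ j, W k j = 1 := by
      have := congrFun hrow k
      simpa [Matrix.mulVec, dotProduct] using this
    rw [hJs]
    simp only [Matrix.mulVec, dotProduct, mul_sub, Finset.sum_sub_distrib,
      ← Finset.sum_mul, hrk, one_mul]
  rw [hWJ, centering_mulVec_apply, centering_mulVec_apply, Finset.sum_sub_distrib,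
    Finset.sum_const, Finset.card_univ, Fintype.card_fin, nsmul_eq_mul, mul_sub,
    ← mul_assoc, hN, one_mul]
  ring

/-- If `W 1 = 1` and the spectral norm `ρ` of the symmetric PSD matrix `Wᵀ J W`
(characterized by the Rayleigh-quotient bound `vᵀ (Wᵀ J W) v ≤ ρ ‖v‖²`) satisfies
`ρ < 1`, then `‖J W s‖² ≤ ρ ‖J s‖²`: the disagreement vector contracts by `√ρ`. -/
theorem stmt6 (N : ℕ) (W : Matrix (Fin N) (Fin N) ℝ)
    (hrow : W.mulVec (fun _ => 1) = fun _ => 1)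
    (ρ : ℝ)
    (hρ : ∀ v : Fin N → ℝ,
      v ⬝ᵥ (W.transpose * centering N * W).mulVec v ≤ ρ * (v ⬝ᵥ v))
    (hρ1 : ρ < 1)
    (s : Fin N → ℝ) :
    ((centering N).mulVec (W.mulVec s)) ⬝ᵥ ((centering N).mulVec (W.mulVec s)) ≤
      ρ * (((centering N).mulVec s) ⬝ᵥ ((centering N).mulVec s)) := by
  have dotJ : ∀ u : Fin N → ℝ,
      (centering N).mulVec u ⬝ᵥ (centering N).mulVec u =
        u ⬝ᵥ (centering N).mulVec u := by
    intro u
    rw [Matrix.dotProduct_mulVec]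
    have h : Matrix.vecMul ((centering N).mulVec u) (centering N) = (centering N).mulVec u := by
      calc Matrix.vecMul ((centering N).mulVec u) (centering N)
          = Matrix.vecMul ((centering N).mulVec u) (centering N).transpose := by
            rw [centering_symm]
        _ = (centering N).mulVec ((centering N).mulVec u) :=
            Matrix.vecMul_transpose _ _
        _ = (centering N).mulVec u := centering_idem N u
    rw [h, dotProduct_comm]
  have hray : ∀ v : Fin N → ℝ,
      v ⬝ᵥ (W.transpose * centering N * W).mulVec v =
        (W.mulVec v) ⬝ᵥ (centering N).mulVec (W.mulVec v) := by
    intro v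
    rw [← Matrix.mulVec_mulVec, ← Matrix.mulVec_mulVec, Matrix.dotProduct_mulVec,
      Matrix.vecMul_transpose]
  have key : ((centering N).mulVec (W.mulVec s)) ⬝ᵥ ((centering N).mulVec (W.mulVec s)) =
      ((centering N).mulVec s) ⬝ᵥ
        (W.transpose * centering N * W).mulVec ((centering N).mulVec s) := by
    rw [← centering_W N W hrow s, dotJ, hray]
  rw [key]
  exact hρ _
end

section
/- Let (x_n) be a sequence in ℝᵈ satisfying x_n = x_{n-1} + λ_n(v_n - x_{n-1}) where λ_n ∈ [0,1], ∑λ_n = ∞, and (v_n) is bounded with v_n → v*. Then x_n → v*. -/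
open Filter

/-- Deterministic stochastic-approximation recursion: if
`x_n = x_{n-1} + λ_n (v_n - x_{n-1})` with `λ_n ∈ [0,1]`, `∑ λ_n = ∞`, and `(v_n)`
bounded with `v_n → v*`, then `x_n → v*`. -/
theorem stmt16 (d : ℕ) (x v : ℕ → EuclideanSpace ℝ (Fin d)) (lam : ℕ → ℝ)
    (hlam : ∀ n, lam n ∈ Set.Icc (0 : ℝ) 1)
    (hdiv : Tendsto (fun N => ∑ n ∈ Finset.range N, lam n) atTop atTop)
    (C : ℝ) (hbd : ∀ n, ‖v n‖ ≤ C)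
    (vstar : EuclideanSpace ℝ (Fin d))
    (hv : Tendsto v atTop (nhds vstar))
    (hrec : ∀ n, x (n + 1) = x n + lam (n + 1) • (v (n + 1) - x n)) :
    Tendsto x atTop (nhds vstar) := by
  rw [Metric.tendsto_atTop]
  intro ε hε
  have hε3 : 0 < ε / 3 := by linarith
  rw [Metric.tendsto_atTop] at hv
  obtain ⟨N, hN⟩ := hv (ε / 3) hε3
  -- one-step inequality
  have key : ∀ n ≥ N, ‖x (n + 1) - vstar‖ ≤
      (1 - lam (n + 1)) * ‖x n - vstar‖ + lam (n + 1) * (ε / 3) := by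
    intro n hn
    have h1 : x (n + 1) - vstar
        = (1 - lam (n + 1)) • (x n - vstar) + lam (n + 1) • (v (n + 1) - vstar) := by
      rw [hrec n]; module
    have h0 := (hlam (n + 1)).1
    have h1' := (hlam (n + 1)).2
    have hv' : ‖v (n + 1) - vstar‖ ≤ ε / 3 := by
      have := hN (n + 1) (by omega)
      rw [dist_eq_norm] at this; linarith
    calc ‖x (n + 1) - vstar‖
        ≤ ‖(1 - lam (n + 1)) • (x n - vstar)‖ + ‖lam (n + 1) • (v (n + 1) - vstar)‖ := by
          rw [h1]; exact norm_add_le _ _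
      _ = |1 - lam (n + 1)| * ‖x n - vstar‖ + |lam (n + 1)| * ‖v (n + 1) - vstar‖ := by
          rw [norm_smul, norm_smul, Real.norm_eq_abs, Real.norm_eq_abs]
      _ ≤ (1 - lam (n + 1)) * ‖x n - vstar‖ + lam (n + 1) * (ε / 3) := by
          rw [abs_of_nonneg (by linarith), abs_of_nonneg h0]
          gcongr
  -- induction bound
  have ind : ∀ m, ‖x (N + m) - vstar‖ ≤
      ε / 3 + Real.exp (-(∑ k ∈ Finset.range m, lam (N + k + 1))) * ‖x N - vstar‖ := by
    intro m
    induction m with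
    | zero => simp; positivity
    | succ m ih =>
      have hk := key (N + m) (by omega)
      have hl0 := (hlam (N + m + 1)).1
      have hl1 := (hlam (N + m + 1)).2
      have hexp : (1 - lam (N + m + 1)) ≤ Real.exp (-(lam (N + m + 1))) := by
        have := Real.add_one_le_exp (-(lam (N + m + 1))); linarith
      have hE : (0:ℝ) ≤ Real.exp (-(∑ k ∈ Finset.range m, lam (N + k + 1))) :=
        (Real.exp_pos _).le
      have hxN : (0:ℝ) ≤ ‖x N - vstar‖ := norm_nonneg _
      have hidx : N + (m + 1) = (N + m) + 1 := by ring
      rw [hidx, Finset.sum_range_succ]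
      calc ‖x ((N + m) + 1) - vstar‖
          ≤ (1 - lam ((N + m) + 1)) * ‖x (N + m) - vstar‖ + lam ((N + m) + 1) * (ε / 3) := hk
        _ ≤ (1 - lam ((N + m) + 1)) *
              (ε / 3 + Real.exp (-(∑ k ∈ Finset.range m, lam (N + k + 1))) * ‖x N - vstar‖)
            + lam ((N + m) + 1) * (ε / 3) := by
            gcongr
        _ = ε / 3 + (1 - lam (N + m + 1)) *
              (Real.exp (-(∑ k ∈ Finset.range m, lam (N + k + 1))) * ‖x N - vstar‖) := by ring
        _ ≤ ε / 3 + Real.exp (-(lam (N + m + 1))) *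
              (Real.exp (-(∑ k ∈ Finset.range m, lam (N + k + 1))) * ‖x N - vstar‖) := by
            gcongr
        _ = ε / 3 + Real.exp (-((∑ k ∈ Finset.range m, lam (N + k + 1)) + lam (N + m + 1)))
              * ‖x N - vstar‖ := by
            rw [neg_add, Real.exp_add]; ring
  -- divergence of the shifted partial sums
  have hT : Tendsto (fun m => ∑ k ∈ Finset.range m, lam (N + k + 1)) atTop atTop := by
    have hshift : Tendsto (fun m : ℕ => N + 1 + m) atTop atTop :=
      tendsto_atTop_mono (fun m => Nat.le_add_left m (N + 1)) tendsto_id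
    have h1 : Tendsto (fun m => ∑ n ∈ Finset.range (N + 1 + m), lam n) atTop atTop :=
      hdiv.comp hshift
    have h2 : (fun m => ∑ k ∈ Finset.range m, lam (N + k + 1))
        = fun m => (∑ n ∈ Finset.range (N + 1 + m), lam n) - ∑ n ∈ Finset.range (N + 1), lam n := by
      funext m
      rw [Finset.sum_range_add]
      have : ∀ k, lam (N + 1 + k) = lam (N + k + 1) := by intro k; ring_nf
      simp [this]
    rw [h2]
    exact tendsto_atTop_add_const_right _ _ h1
  have hzero : Tendsto (fun m => Real.exp (-(∑ k ∈ Finset.range m, lam (N + k + 1)))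
      * ‖x N - vstar‖) atTop (nhds 0) := by
    have := (Real.tendsto_exp_neg_atTop_nhds_zero.comp hT).mul_const ‖x N - vstar‖
    simpa using this
  have hev : ∀ᶠ m in atTop, Real.exp (-(∑ k ∈ Finset.range m, lam (N + k + 1)))
      * ‖x N - vstar‖ < ε / 3 := by
    have := hzero.eventually (eventually_lt_nhds hε3)
    simpa using this
  obtain ⟨M, hM⟩ := eventually_atTop.mp hev
  refine ⟨N + M, fun n hn => ?_⟩
  have hnm : n = N + (n - N) := by omega
  have hmM : M ≤ n - N := by omega
  rw [dist_eq_norm, hnm]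
  have h1 := ind (n - N)
  have h2 := hM (n - N) hmM
  linarith
end
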